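/- Let L be a semimodular lattice and let x < x' ≤ y with x' covering x. Then R_L(x,y) = R_L(x',y) − Σ_w R_L(x,w), where the sum is over all w ∈ L such that y covers w, x ≤ w, and x' ≰ w. Here R_L(u,v) = Σ_{z : z ∨ u = v} t^{ρ(z)}. -/

import Mathlib

open scoped Classical in
/-- `R_L(u,v) = Σ_{z : z ⊔ u = v} t^{ρ z}`, as a polynomial in `t`. -/
noncomputable def RL {L : Type*} [Lattice L] [Fintype L] (ρ : L → ℕ) (u v : L) :
    Polynomial ℤ :=
  ∑ z ∈ Finset.univ.filter (fun z : L => z ⊔ u = v), Polynomial.X ^ ρ z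

section Aux

variable {L : Type*} [Lattice L] [Fintype L]

lemma rho_strict_mono (ρ : L → ℕ) (hcov : ∀ a b : L, a ⋖ b → ρ b = ρ a + 1) :
    ∀ a b : L, a < b → ρ a < ρ b := by
  have wf : WellFoundedGT L := inferInstance
  intro a
  induction a using wf.wf.induction with
  | _ a IH =>
    intro b hab
    classical
    obtain ⟨m, hm, hmin⟩ : ∃ m ∈ Finset.univ.filter (fun c : L => a < c ∧ c ≤ b),
        ∀ c ∈ Finset.univ.filter (fun c : L => a < c ∧ c ≤ b), ¬ c < m := by
      obtain ⟨m, hm⟩ := Finset.exists_minimal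
        (s := Finset.univ.filter (fun c : L => a < c ∧ c ≤ b))
        ⟨b, by simp [hab]⟩
      exact ⟨m, hm.1, fun c hc hlt => hlt.not_ge (hm.2 hc hlt.le)⟩
    simp only [Finset.mem_filter, Finset.mem_univ, true_and] at hm
    have hcov' : a ⋖ m := by
      refine ⟨hm.1, fun c hac hcm => ?_⟩
      exact hmin c (by simp [hac, le_of_lt (lt_of_lt_of_le hcm hm.2)]) hcm
    have hρm : ρ m = ρ a + 1 := hcov _ _ hcov'
    rcases eq_or_lt_of_le hm.2 with h | h
    · rw [h] at hρm; omega
    · have := IH m hcov'.lt b h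
      omega

lemma covby_of_rho (ρ : L → ℕ) (hcov : ∀ a b : L, a ⋖ b → ρ b = ρ a + 1)
    {a b : L} (hab : a < b) (hρ : ρ b ≤ ρ a + 1) : a ⋖ b := by
  refine ⟨hab, fun c hac hcb => ?_⟩
  have h1 := rho_strict_mono ρ hcov a c hac
  have h2 := rho_strict_mono ρ hcov c b hcb
  omega

end Aux

open scoped Classical in
/-- In a semimodular lattice, if `x'` covers `x` and `x' ≤ y`, then
`R_L(x,y) = R_L(x',y) - Σ_w R_L(x,w)`, the sum over all `w` such that `y` covers `w`,
`x ≤ w` and `x' ≰ w`. -/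
theorem stmt6 {L : Type*} [Lattice L] [Fintype L] [OrderBot L]
    (ρ : L → ℕ) (hρ0 : ρ ⊥ = 0) (hcov : ∀ a b : L, a ⋖ b → ρ b = ρ a + 1)
    (hsub : ∀ a b : L, ρ (a ⊔ b) + ρ (a ⊓ b) ≤ ρ a + ρ b)
    (x x' y : L) (hxx' : x ⋖ x') (hx'y : x' ≤ y) :
    RL ρ x y = RL ρ x' y -
      ∑ w ∈ Finset.univ.filter (fun w : L => w ⋖ y ∧ x ≤ w ∧ ¬ x' ≤ w), RL ρ x w := by
  have hxy : x ≤ y := hxx'.le.trans hx'y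
  -- semimodularity step: for any z, z ⊔ x = z ⊔ x' or (z ⊔ x) ⋖ (z ⊔ x')
  have hstep : ∀ z : L, z ⊔ x = z ⊔ x' ∨ (z ⊔ x) ⋖ (z ⊔ x') := by
    intro z
    rcases eq_or_lt_of_le (sup_le_sup_left hxx'.le z) with h | h
    · exact Or.inl h
    · right
      refine covby_of_rho ρ hcov h ?_
      have key := hsub x' (z ⊔ x)
      have h1 : x' ⊔ (z ⊔ x) = z ⊔ x' := by
        rw [sup_comm z x', sup_comm z x, ← sup_assoc, sup_of_le_left hxx'.le]
      have h2 : x ≤ x' ⊓ (z ⊔ x) := le_inf hxx'.le (le_sup_right)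
      have h3 : ρ x ≤ ρ (x' ⊓ (z ⊔ x)) := by
        rcases eq_or_lt_of_le h2 with h | h
        · rw [← h]
        · exact (rho_strict_mono ρ hcov _ _ h).le
      have h4 : ρ x' = ρ x + 1 := hcov _ _ hxx'
      rw [h1] at key
      omega
  set f : L → Polynomial ℤ := fun z => Polynomial.X ^ ρ z with hf
  set W : Finset L := Finset.univ.filter (fun w : L => w ⋖ y ∧ x ≤ w ∧ ¬ x' ≤ w) with hW
  -- key facts
  have fact1 : ∀ z : L, z ⊔ x = y → z ⊔ x' = y := by
    intro z h
    have : y ≤ z ⊔ x' := h ▸ sup_le_sup_left hxx'.le z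
    exact le_antisymm (sup_le (h ▸ le_sup_left) hx'y) this
  have fact2 : ∀ z : L, z ⊔ x' = y → z ⊔ x ≠ y → (z ⊔ x) ∈ W := by
    intro z h hne
    rcases hstep z with h' | h'
    · exact absurd (h' ▸ h) hne
    · rw [h] at h'
      simp only [hW, Finset.mem_filter, Finset.mem_univ, true_and]
      refine ⟨h', le_sup_right, fun hx'le => ?_⟩
      have : z ⊔ x' ≤ z ⊔ x := sup_le le_sup_left hx'le
      exact h'.ne (le_antisymm h'.le (h ▸ this))
  have fact3 : ∀ w ∈ W, ∀ z : L, z ⊔ x = w → z ⊔ x' = y ∧ z ⊔ x ≠ y := by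
    intro w hw z hz
    simp only [hW, Finset.mem_filter, Finset.mem_univ, true_and] at hw
    constructor
    · have h1 : z ⊔ x' = w ⊔ x' := by
        rw [← hz, sup_assoc, sup_of_le_right hxx'.le]
      have h2 : w < w ⊔ x' := lt_of_le_of_ne le_sup_left
        (fun h => hw.2.2 (h ▸ le_sup_right))
      have h3 : w ⊔ x' ≤ y := sup_le hw.1.le hx'y
      rw [h1]
      rcases eq_or_lt_of_le h3 with h | h
      · exact h
      · exact absurd h (hw.1.2 h2)
    · rw [hz]; exact hw.1.ne
  -- now the counting
  rw [eq_sub_iff_add_eq]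
  have split : RL ρ x' y =
      (∑ z ∈ Finset.univ.filter (fun z : L => z ⊔ x' = y ∧ z ⊔ x = y), f z) +
      (∑ z ∈ Finset.univ.filter (fun z : L => z ⊔ x' = y ∧ z ⊔ x ≠ y), f z) := by
    rw [RL, ← Finset.sum_filter_add_sum_filter_not
      (Finset.univ.filter (fun z : L => z ⊔ x' = y)) (fun z => z ⊔ x = y) f]
    congr 1 <;> rw [Finset.filter_filter]
  have e1 : Finset.univ.filter (fun z : L => z ⊔ x' = y ∧ z ⊔ x = y)
      = Finset.univ.filter (fun z : L => z ⊔ x = y) := by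
    apply Finset.filter_congr
    intro z _
    simp only [iff_iff_implies_and_implies]
    exact ⟨fun h => h.2, fun h => ⟨fact1 z h, h⟩⟩
  have e2 : (∑ z ∈ Finset.univ.filter (fun z : L => z ⊔ x' = y ∧ z ⊔ x ≠ y), f z)
      = ∑ w ∈ W, RL ρ x w := by
    rw [← Finset.sum_fiberwise_of_maps_to (g := fun z : L => z ⊔ x)
      (t := W) (fun z hz => by
        simp only [Finset.mem_filter, Finset.mem_univ, true_and] at hz
        exact fact2 z hz.1 hz.2) f]
    apply Finset.sum_congr rfl
    intro w hw
    rw [RL]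
    apply Finset.sum_congr _ (fun _ _ => rfl)
    rw [Finset.filter_filter]
    apply Finset.filter_congr
    intro z _
    simp only [iff_iff_implies_and_implies]
    exact ⟨fun h => h.2, fun h => ⟨⟨(fact3 w hw z h).1, (fact3 w hw z h).2⟩, h⟩⟩
  rw [split, e1, e2, RL]
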